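/- Let g be a metric on ℝⁿ with values in ℂ^{n×n} such that at some point x₀, g(x₀) = I and Θ^g_{jk}(x₀) is the matrix with a 1 in row j, column k and 0 elsewhere. Then at x₀ the Nakano form of the inverse metric satisfies Σ_{j,k=1}^n (Θ^{g⁻¹}_{jk} u_j, u_k)_{g⁻¹} = -|Σ_{j=1}^n u_{jj}|² ≤ 0 for every n-tuple {u_j} ⊂ ℂⁿ with u_j = (u_{j1},…,u_{jn}), while the Nakano form of g at x₀ equals Σ_{j,k} u_{jk}\bar{u}_{kj}, which is neither always nonnegative nor always nonpositive for n ≥ 2. -/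

import Mathlib

open scoped ComplexOrder
open Matrix MeasureTheory

section Preamble

variable {ι : Type*} [Fintype ι] [DecidableEq ι] {r : ℕ}

/-- Partial derivative of a complex-valued function on `ι → ℝ` in direction `j`. -/
noncomputable def pdC (j : ι) (f : (ι → ℝ) → ℂ) (x : ι → ℝ) : ℂ :=
  fderiv ℝ f x (Pi.single j 1)

/-- Partial derivative of a real-valued function on `ι → ℝ` in direction `j`. -/
noncomputable def pdR (j : ι) (f : (ι → ℝ) → ℝ) (x : ι → ℝ) : ℝ :=
  fderiv ℝ f x (Pi.single j 1)

/-- Entrywise partial derivative of a matrix-valued function. -/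
noncomputable def mpd (j : ι) (g : (ι → ℝ) → Matrix (Fin r) (Fin r) ℂ) (x : ι → ℝ) :
    Matrix (Fin r) (Fin r) ℂ :=
  Matrix.of fun a b => pdC j (fun y => g y a b) x

/-- The curvature-type quantity `Θ_{jk} = ∂_{x_k}(g⁻¹ ∂_{x_j} g)`. -/
noncomputable def Theta (g : (ι → ℝ) → Matrix (Fin r) (Fin r) ℂ) (j k : ι) (x : ι → ℝ) :
    Matrix (Fin r) (Fin r) ℂ :=
  mpd k (fun y => (g y)⁻¹ * mpd j g y) x

/-- The pairing `(u, v)_g = v* g u`. -/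
noncomputable def ip (g : Matrix (Fin r) (Fin r) ℂ) (u v : Fin r → ℂ) : ℂ :=
  star v ⬝ᵥ g.mulVec u

/-- A metric: twice differentiable entries, Hermitian positive definite values. -/
def IsMetric (g : (ι → ℝ) → Matrix (Fin r) (Fin r) ℂ) : Prop :=
  (∀ x, (g x).PosDef) ∧ ∀ a b, ContDiff ℝ 2 fun x => g x a b

/-- Log concavity in the sense of Nakano. -/
def NakanoLogConcave (g : (ι → ℝ) → Matrix (Fin r) (Fin r) ℂ) : Prop :=
  ∀ (x : ι → ℝ) (u : ι → Fin r → ℂ),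
    ∑ j, ∑ k, ip (g x) ((Theta g j k x).mulVec (u j)) (u k) ≤ 0

/-- Log concavity in the sense of Griffiths. -/
def GriffithsLogConcave (g : (ι → ℝ) → Matrix (Fin r) (Fin r) ℂ) : Prop :=
  ∀ (x : ι → ℝ) (u : Fin r → ℂ) (v : ι → ℂ),
    ∑ j, ∑ k, ip (g x) ((Theta g j k x).mulVec u) u * (v j * star (v k)) ≤ 0

end Preamble

section Helpers
variable {ι : Type*} [Fintype ι] [DecidableEq ι] {r : ℕ}

lemma pdC_const' (j : ι) (c : ℂ) (x : ι → ℝ) : pdC j (fun _ => c) x = 0 := by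
  simp [pdC, fderiv_const]

lemma pdC_sum' (j : ι) {α : Type*} (s : Finset α) (F : α → (ι → ℝ) → ℂ) (x : ι → ℝ)
    (h : ∀ i ∈ s, DifferentiableAt ℝ (F i) x) :
    pdC j (fun y => ∑ i ∈ s, F i y) x = ∑ i ∈ s, pdC j (F i) x := by
  unfold pdC
  rw [fderiv_fun_sum h]
  simp

lemma pdC_mul' (j : ι) (f h : (ι → ℝ) → ℂ) (x : ι → ℝ)
    (hf : DifferentiableAt ℝ f x) (hh : DifferentiableAt ℝ h x) :
    pdC j (fun y => f y * h y) x = pdC j f x * h x + f x * pdC j h x := by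
  unfold pdC
  rw [fderiv_fun_mul hf hh]
  simp
  ring

lemma pdC_neg' (j : ι) (f : (ι → ℝ) → ℂ) (x : ι → ℝ) :
    pdC j (fun y => -(f y)) x = -pdC j f x := by
  unfold pdC
  rw [fderiv_fun_neg]
  simp

lemma pdC_conj' (j : ι) (f : (ι → ℝ) → ℂ) (x : ι → ℝ) (hf : DifferentiableAt ℝ f x) :
    pdC j (fun y => (starRingEnd ℂ) (f y)) x = (starRingEnd ℂ) (pdC j f x) := by
  unfold pdC
  have h1 : HasFDerivAt (fun y => (starRingEnd ℂ) (f y))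
      ((Complex.conjCLE.toContinuousLinearMap).comp (fderiv ℝ f x)) x :=
    (Complex.conjCLE.toContinuousLinearMap.hasFDerivAt).comp x hf.hasFDerivAt
  rw [h1.fderiv]
  simp

lemma contDiff_pdC' {f : (ι → ℝ) → ℂ} (hf : ContDiff ℝ 2 f) (j : ι) :
    ContDiff ℝ 1 (fun y => pdC j f y) :=
  (hf.fderiv_right (by norm_num)).clm_apply contDiff_const

lemma diffAt_det' {M : (ι → ℝ) → Matrix (Fin r) (Fin r) ℂ} {x : ι → ℝ}
    (h : ∀ a b, DifferentiableAt ℝ (fun y => M y a b) x) :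
    DifferentiableAt ℝ (fun y => (M y).det) x := by
  simp only [Matrix.det_apply]
  apply DifferentiableAt.fun_sum
  intro σ _
  have hp : DifferentiableAt ℝ (fun y => ∏ i, M y (σ i) i) x := by
    have := (HasFDerivAt.finset_prod (u := Finset.univ)
      (g := fun i y => M y (σ i) i)
      (g' := fun i => fderiv ℝ (fun y => M y (σ i) i) x)
      (fun i _ => (h (σ i) i).hasFDerivAt)).differentiableAt
    simpa using this
  simpa [Units.smul_def] using hp.fun_const_smul ((Equiv.Perm.sign σ : ℤ) : ℂ)

lemma diffAt_inv_entry' {g : (ι → ℝ) → Matrix (Fin r) (Fin r) ℂ}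
    (hpd : ∀ y, (g y).PosDef)
    (hd : ∀ a b x, DifferentiableAt ℝ (fun y => g y a b) x) (a b : Fin r) (x : ι → ℝ) :
    DifferentiableAt ℝ (fun y => (g y)⁻¹ a b) x := by
  have hdet : ∀ y, (g y).det ≠ 0 := fun y =>
    ((Matrix.isUnit_iff_isUnit_det _).1 (hpd y).isUnit).ne_zero
  have he : (fun y => (g y)⁻¹ a b) = fun y => ((g y).det)⁻¹ * (g y).adjugate a b := by
    funext y; rw [Matrix.inv_def]; simp
  rw [he]
  apply DifferentiableAt.mul
  · exact (diffAt_det' (fun a b => hd a b x)).inv (hdet x)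
  · simp only [Matrix.adjugate_apply]
    apply diffAt_det'
    intro c d
    by_cases hc : c = b
    · subst hc; simp only [Matrix.updateRow_self]; exact differentiableAt_const _
    · simp only [Matrix.updateRow_ne hc]; exact hd c d x

lemma mpd_apply' (j : ι) (g : (ι → ℝ) → Matrix (Fin r) (Fin r) ℂ) (x : ι → ℝ) (a b : Fin r) :
    mpd j g x a b = pdC j (fun y => g y a b) x := rfl

lemma mpd_const' (j : ι) (C : Matrix (Fin r) (Fin r) ℂ) (x : ι → ℝ) :
    mpd j (fun _ => C) x = 0 := by
  ext a b
  simp [mpd_apply', pdC_const', Matrix.zero_apply]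

lemma mpd_neg' (j : ι) (A : (ι → ℝ) → Matrix (Fin r) (Fin r) ℂ) (x : ι → ℝ) :
    mpd j (fun y => -(A y)) x = -(mpd j A x) := by
  ext a b
  have : (fun y => (-(A y)) a b) = fun y => -(A y a b) := by funext y; simp
  simp only [mpd_apply', Matrix.neg_apply, this, pdC_neg']

lemma mpd_mul' (j : ι) (A B : (ι → ℝ) → Matrix (Fin r) (Fin r) ℂ) (x : ι → ℝ)
    (hA : ∀ a b, DifferentiableAt ℝ (fun y => A y a b) x)
    (hB : ∀ a b, DifferentiableAt ℝ (fun y => B y a b) x) :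
    mpd j (fun y => A y * B y) x = mpd j A x * B x + A x * mpd j B x := by
  ext a b
  have h1 : (fun y => (A y * B y) a b) = fun y => ∑ c, A y a c * B y c b := by
    funext y; simp [Matrix.mul_apply]
  rw [Matrix.add_apply, Matrix.mul_apply, Matrix.mul_apply, mpd_apply', h1,
    pdC_sum' j Finset.univ (fun c y => A y a c * B y c b) x (fun c _ => ((hA a c).mul (hB c b)))]
  rw [← Finset.sum_add_distrib]
  refine Finset.sum_congr rfl fun c _ => ?_
  rw [pdC_mul' j _ _ x (hA a c) (hB c b), mpd_apply', mpd_apply']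

end Helpers

section Main
variable {ι : Type*} [Fintype ι] [DecidableEq ι] {r : ℕ}
variable {g : (ι → ℝ) → Matrix (Fin r) (Fin r) ℂ}

lemma theta_inv (hg : IsMetric g) (x₀ : ι → ℝ) (h0 : g x₀ = 1) (j k : ι) :
    Theta (fun x => (g x)⁻¹) j k x₀ = -((Theta g j k x₀)ᴴ) := by
  have hd : ∀ (a b : Fin r) (x : ι → ℝ), DifferentiableAt ℝ (fun y => g y a b) x := fun a b x =>
    ((hg.2 a b).differentiable (by norm_num)).differentiableAt
  have hdet : ∀ y, IsUnit (g y).det := fun y =>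
    (Matrix.isUnit_iff_isUnit_det _).1 (hg.1 y).isUnit
  have hdi : ∀ (a b : Fin r) (x : ι → ℝ), DifferentiableAt ℝ (fun y => (g y)⁻¹ a b) x :=
    fun a b x => diffAt_inv_entry' hg.1 hd a b x
  have hdm : ∀ (i : ι) (a b : Fin r) (x : ι → ℝ),
      DifferentiableAt ℝ (fun y => mpd i g y a b) x := fun i a b x =>
    ((contDiff_pdC' (hg.2 a b) i).differentiable one_ne_zero).differentiableAt
  have hrel : ∀ (x : ι → ℝ) (i : ι),
      mpd i g x * (g x)⁻¹ + g x * mpd i (fun y => (g y)⁻¹) x = 0 := by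
    intro x i
    have h1 : (fun y => g y * (g y)⁻¹) = fun _ => (1 : Matrix (Fin r) (Fin r) ℂ) :=
      funext fun y => Matrix.mul_nonsing_inv _ (hdet y)
    have h2 := mpd_mul' i g (fun y => (g y)⁻¹) x (fun a b => hd a b x) (fun a b => hdi a b x)
    rw [h1, mpd_const'] at h2
    exact h2.symm
  have hB0 : ∀ i : ι, mpd i (fun y => (g y)⁻¹) x₀ = -(mpd i g x₀) := by
    intro i
    have h2 := hrel x₀ i
    rw [h0, inv_one, mul_one, one_mul] at h2
    exact eq_neg_of_add_eq_zero_left (by rwa [add_comm] at h2)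
  have hfun : (fun y => ((g y)⁻¹)⁻¹ * mpd j (fun z => (g z)⁻¹) y)
      = fun y => -(mpd j g y * (g y)⁻¹) := by
    funext y
    rw [Matrix.nonsing_inv_nonsing_inv _ (hdet y)]
    exact eq_neg_of_add_eq_zero_left (by rw [add_comm]; exact hrel y j)
  have hS := mpd_mul' k (fun y => mpd j g y) (fun y => (g y)⁻¹) x₀
    (fun a b => hdm j a b x₀) (fun a b => hdi a b x₀)
  beta_reduce at hS
  have hTB : Theta (fun x => (g x)⁻¹) j k x₀
      = -(mpd k (mpd j g) x₀ - mpd j g x₀ * mpd k g x₀) := by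
    have e1 : Theta (fun x => (g x)⁻¹) j k x₀
        = mpd k (fun y => -(mpd j g y * (g y)⁻¹)) x₀ := by
      unfold Theta
      rw [← hfun]
    rw [e1, mpd_neg', hS, h0, inv_one, mul_one, hB0 k]
    noncomm_ring
  have hTg : Theta g j k x₀ = mpd k (mpd j g) x₀ - mpd k g x₀ * mpd j g x₀ := by
    have h2 := mpd_mul' k (fun y => (g y)⁻¹) (fun y => mpd j g y) x₀
      (fun a b => hdi a b x₀) (fun a b => hdm j a b x₀)
    beta_reduce at h2
    unfold Theta
    rw [h2, hB0 k, h0, inv_one, one_mul]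
    noncomm_ring
  have hHg : ∀ (i : ι) (x : ι → ℝ), (mpd i g x)ᴴ = mpd i g x := by
    intro i x
    ext a b
    rw [Matrix.conjTranspose_apply, mpd_apply', mpd_apply']
    have he : (fun y => g y b a) = fun y => (starRingEnd ℂ) (g y a b) :=
      funext fun y => by rw [← (hg.1 y).1.apply b a]; rfl
    rw [he, pdC_conj' i _ x (hd a b x)]
    simp
  have hHS : (mpd k (mpd j g) x₀)ᴴ = mpd k (mpd j g) x₀ := by
    ext a b
    rw [Matrix.conjTranspose_apply, mpd_apply', mpd_apply']
    have he : (fun y => mpd j g y b a) = fun y => (starRingEnd ℂ) (mpd j g y a b) := by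
      funext y
      conv_lhs => rw [← hHg j y]
      rw [Matrix.conjTranspose_apply]
      rfl
    rw [he, pdC_conj' k _ x₀ (hdm j a b x₀)]
    simp
  rw [hTB, hTg, Matrix.conjTranspose_sub, Matrix.conjTranspose_mul, hHS, hHg, hHg]
end Main

theorem statement12 {n : ℕ} (g : (Fin n → ℝ) → Matrix (Fin n) (Fin n) ℂ)
    (hg : IsMetric g) (x₀ : Fin n → ℝ) (h0 : g x₀ = 1)
    (hΘ : ∀ j k, Theta g j k x₀ = Matrix.single j k 1) :
    (∀ u : Fin n → Fin n → ℂ,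
      ∑ j, ∑ k, ip ((g x₀)⁻¹) ((Theta (fun x => (g x)⁻¹) j k x₀).mulVec (u j)) (u k)
          = -((‖∑ j, u j j‖ ^ 2 : ℝ) : ℂ) ∧
      ∑ j, ∑ k, ip ((g x₀)⁻¹) ((Theta (fun x => (g x)⁻¹) j k x₀).mulVec (u j)) (u k) ≤ 0) ∧
    (∀ u : Fin n → Fin n → ℂ,
      ∑ j, ∑ k, ip (g x₀) ((Theta g j k x₀).mulVec (u j)) (u k)
        = ∑ j, ∑ k, u j k * star (u k j)) ∧
    (2 ≤ n →
      (∃ u : Fin n → Fin n → ℂ, 0 < ∑ j, ∑ k, u j k * star (u k j)) ∧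
      (∃ u : Fin n → Fin n → ℂ, ∑ j, ∑ k, u j k * star (u k j) < 0)) := by
  have hstd : ∀ j k : Fin n, Theta (fun x => (g x)⁻¹) j k x₀
      = -(Matrix.single k j (1:ℂ)) := by
    intro j k
    rw [theta_inv hg x₀ h0, hΘ]
    congr 1
    ext a b
    simp [Matrix.conjTranspose_apply, Matrix.single, apply_ite (starRingEnd ℂ),
      and_comm]
  refine ⟨?_, ?_, ?_⟩
  · intro u
    have hterm : ∀ j k : Fin n,
        ip ((g x₀)⁻¹) ((Theta (fun x => (g x)⁻¹) j k x₀).mulVec (u j)) (u k)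
          = -(u j j * (starRingEnd ℂ) (u k k)) := by
      intro j k
      rw [hstd, h0, inv_one]
      simp [ip, Matrix.neg_mulVec, Matrix.one_mulVec, Matrix.mulVec, dotProduct,
        Matrix.single, Matrix.one_apply, ite_and, ite_mul, mul_ite,
        Finset.sum_ite_eq, Finset.sum_ite_eq', mul_comm]
    have hsum : ∑ j, ∑ k, ip ((g x₀)⁻¹)
        ((Theta (fun x => (g x)⁻¹) j k x₀).mulVec (u j)) (u k)
        = -((‖∑ j, u j j‖ ^ 2 : ℝ) : ℂ) := by
      have h1 : ∑ j, ∑ k, ip ((g x₀)⁻¹)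
          ((Theta (fun x => (g x)⁻¹) j k x₀).mulVec (u j)) (u k)
          = -((∑ j, u j j) * (starRingEnd ℂ) (∑ k, u k k)) := by
        simp only [hterm, map_sum, Finset.sum_mul_sum, Finset.sum_neg_distrib]
      rw [h1]
      congr 1
      rw [Complex.mul_conj, Complex.normSq_eq_norm_sq]
    refine ⟨hsum, ?_⟩
    rw [hsum]
    have : ((0:ℝ):ℂ) = 0 := by norm_cast
    rw [← this, ← Complex.ofReal_neg, Complex.real_le_real]
    exact neg_nonpos.mpr (sq_nonneg _)
  · intro u
    have hterm : ∀ j k : Fin n,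
        ip (g x₀) ((Theta g j k x₀).mulVec (u j)) (u k)
          = u j k * (starRingEnd ℂ) (u k j) := by
      intro j k
      rw [hΘ, h0]
      simp [ip, Matrix.one_mulVec, Matrix.mulVec, dotProduct,
        Matrix.single, Matrix.one_apply, ite_and, ite_mul, mul_ite,
        Finset.sum_ite_eq, Finset.sum_ite_eq', mul_comm]
    simp only [hterm]
    rfl
  · intro hn
    set i0 : Fin n := ⟨0, by omega⟩ with hi0
    set i1 : Fin n := ⟨1, by omega⟩ with hi1
    have hne : i0 ≠ i1 := by simp [hi0, hi1, Fin.ext_iff]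
    constructor
    · refine ⟨fun j k => if j = k then (1:ℂ) else 0, ?_⟩
      have hs : ∑ j : Fin n, ∑ k : Fin n, (fun j k => if j = k then (1:ℂ) else 0) j k
          * star ((fun j k => if j = k then (1:ℂ) else 0) k j) = (n : ℂ) := by
        simp [apply_ite (star : ℂ → ℂ), ite_mul, mul_ite, Finset.sum_ite_eq,
          Finset.sum_ite_eq']
      rw [hs]
      have : ((0:ℝ):ℂ) < ((n:ℝ):ℂ) := by
        rw [Complex.real_lt_real]; exact_mod_cast by omega
      simpa using this
    · refine ⟨fun j k => if j = i0 ∧ k = i1 then (1:ℂ) else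
        if j = i1 ∧ k = i0 then -1 else 0, ?_⟩
      have hpt : ∀ j k : Fin n,
          (fun j k => if j = i0 ∧ k = i1 then (1:ℂ) else
            if j = i1 ∧ k = i0 then -1 else 0) j k
          * star ((fun j k => if j = i0 ∧ k = i1 then (1:ℂ) else
            if j = i1 ∧ k = i0 then -1 else 0) k j)
          = (if j = i0 ∧ k = i1 then (-1:ℂ) else 0)
            + (if j = i1 ∧ k = i0 then (-1:ℂ) else 0) := by
        intro j k
        by_cases h1 : j = i0 <;> by_cases h2 : k = i1 <;>
          by_cases h3 : j = i1 <;> by_cases h4 : k = i0 <;>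
          simp_all [hne, hne.symm]
      have hs : ∑ j : Fin n, ∑ k : Fin n, (fun j k => if j = i0 ∧ k = i1 then (1:ℂ) else
            if j = i1 ∧ k = i0 then -1 else 0) j k
          * star ((fun j k => if j = i0 ∧ k = i1 then (1:ℂ) else
            if j = i1 ∧ k = i0 then -1 else 0) k j) = -2 := by
        simp only [hpt]
        rw [Finset.sum_congr rfl fun j _ => Finset.sum_add_distrib,
          Finset.sum_add_distrib]
        simp [ite_and, Finset.sum_ite_eq, Finset.sum_ite_eq']
        norm_num
      rw [hs]
      have : ((-2:ℝ):ℂ) < ((0:ℝ):ℂ) := by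
        rw [Complex.real_lt_real]; norm_num
      simpa using this
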